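/- Let α and β be weight functions on finite sets U and V, and let γ, γ' ∈ J(α,β) with supp(γ') ⊆ supp(γ). Then there exists t > 0 such that (1+t)·γ − t·γ' ∈ J(α,β). -/
import Mathlib


open Finset

def IsWeightFunction {U : Type*} [Fintype U] (α : U → U → ℝ) : Prop :=
  (∀ u u', 0 ≤ α u u') ∧ (∀ u u', α u u' = α u' u) ∧ (∑ u, ∑ u', α u u' = 1)

noncomputable def marginal {U : Type*} [Fintype U] (α : U → U → ℝ) (u : U) : ℝ :=
  ∑ u', α u u'

def IsWeightJoining {U V : Type*} [Fintype U] [Fintype V]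
    (α : U → U → ℝ) (β : V → V → ℝ) (γ : U × V → U × V → ℝ) : Prop :=
  IsWeightFunction γ ∧
  (∀ u, ∑ v, marginal γ (u, v) = marginal α u) ∧
  (∀ v, ∑ u, marginal γ (u, v) = marginal β v) ∧
  (∀ u u' v, marginal α u * ∑ v', γ (u, v) (u', v') = α u u' * marginal γ (u, v)) ∧
  (∀ v v' u, marginal β v * ∑ u', γ (u, v) (u', v') = β v v' * marginal γ (u, v))

def weightJoinings {U V : Type*} [Fintype U] [Fintype V]
    (α : U → U → ℝ) (β : V → V → ℝ) : Set (U × V → U × V → ℝ) :=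
  {γ | IsWeightJoining α β γ}

noncomputable def ogjCost {U V : Type*} [Fintype U] [Fintype V]
    (c : U → V → ℝ) (γ : U × V → U × V → ℝ) : ℝ :=
  ∑ p : U × V, c p.1 p.2 * marginal γ p

/-- The support of a function on pairs of pairs. -/
def jsupp {U V : Type*} (γ : U × V → U × V → ℝ) : Set ((U × V) × (U × V)) :=
  {pq | 0 < γ pq.1 pq.2}

/-- If `γ, γ' ∈ J(α,β)` with `supp(γ') ⊆ supp(γ)`, then for some
`t > 0` the function `(1+t)·γ − t·γ'` is again a weight joining of `α` and `β`. -/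
theorem exists_pos_combination_weightJoining
    {U V : Type*} [Fintype U] [Fintype V]
    (α : U → U → ℝ) (β : V → V → ℝ)
    (hα : IsWeightFunction α) (hβ : IsWeightFunction β)
    (γ γ' : U × V → U × V → ℝ)
    (hγ : γ ∈ weightJoinings α β) (hγ' : γ' ∈ weightJoinings α β)
    (hsupp : jsupp γ' ⊆ jsupp γ) :
    ∃ t : ℝ, 0 < t ∧
      (fun p q => (1 + t) * γ p q - t * γ' p q) ∈ weightJoinings α β := by

  obtain ⟨⟨hγnn, hγsym, hγsum⟩, hγp, hγq, hγA, hγB⟩ := hγ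
  obtain ⟨⟨hγ'nn, hγ'sym, hγ'sum⟩, hγ'p, hγ'q, hγ'A, hγ'B⟩ := hγ'
  -- nonemptiness
  haveI : Nonempty ((U × V) × (U × V)) := by
    rcases isEmpty_or_nonempty ((U × V) × (U × V)) with h | h
    · exfalso
      have : (∑ p : U × V, ∑ q : U × V, γ p q) = 0 := by
        rcases isEmpty_or_nonempty (U × V) with h2 | h2
        · simp
        · exact absurd ‹IsEmpty ((U × V) × (U × V))›
            (not_isEmpty_of_nonempty _)
      rw [hγsum] at this; norm_num at this
    · exact h
  set f : (U × V) × (U × V) → ℝ :=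
    fun pq => if 0 < γ' pq.1 pq.2 then γ pq.1 pq.2 / γ' pq.1 pq.2 else 1 with hf
  have hfpos : ∀ pq, 0 < f pq := by
    intro pq
    by_cases h : 0 < γ' pq.1 pq.2
    · have hg : 0 < γ pq.1 pq.2 := hsupp h
      simp only [hf, if_pos h]
      exact div_pos hg h
    · simp [hf, if_neg h]
  obtain ⟨pq0, -, hmin⟩ := Finset.exists_min_image
    (Finset.univ : Finset ((U × V) × (U × V))) f ⟨Classical.arbitrary _, Finset.mem_univ _⟩
  set t : ℝ := f pq0 with ht
  have htpos : 0 < t := hfpos pq0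
  have hkey : ∀ p q : U × V, t * γ' p q ≤ γ p q := by
    intro p q
    by_cases h : 0 < γ' p q
    · have hg : 0 < γ p q := hsupp (show (0:ℝ) < γ' (p,q).1 (p,q).2 from h)
      have h1 : t ≤ f (p, q) := hmin (p, q) (Finset.mem_univ _)
      have h2 : f (p, q) = γ p q / γ' p q := by simp [hf, if_pos h]
      rw [h2] at h1
      calc t * γ' p q ≤ (γ p q / γ' p q) * γ' p q :=
            mul_le_mul_of_nonneg_right h1 (le_of_lt h)
        _ = γ p q := div_mul_cancel₀ _ (ne_of_gt h)
    · have h0 : γ' p q = 0 := le_antisymm (not_lt.mp h) (hγ'nn p q)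
      rw [h0, mul_zero]; exact hγnn p q
  have hmarg : ∀ x, marginal (fun p q => (1 + t) * γ p q - t * γ' p q) x
      = (1 + t) * marginal γ x - t * marginal γ' x := by
    intro x
    simp [marginal, Finset.sum_sub_distrib, Finset.mul_sum]
  refine ⟨t, htpos, ⟨⟨?_, ?_, ?_⟩, ?_, ?_, ?_, ?_⟩⟩
  · intro p q
    have h1 := hkey p q
    have h2 := hγnn p q
    show 0 ≤ (1 + t) * γ p q - t * γ' p q
    nlinarith [mul_nonneg (le_of_lt htpos) h2]
  · intro p q
    simp only [hγsym p q, hγ'sym p q]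
  · simp only [Finset.sum_sub_distrib, ← Finset.mul_sum, hγsum, hγ'sum]
    ring
  · intro u
    simp only [hmarg, Finset.sum_sub_distrib, ← Finset.mul_sum, hγp, hγ'p]
    ring
  · intro v
    simp only [hmarg, Finset.sum_sub_distrib, ← Finset.mul_sum, hγq, hγ'q]
    ring
  · intro u u' v
    simp only [hmarg]
    have h1 := hγA u u' v
    have h2 := hγ'A u u' v
    simp only [Finset.sum_sub_distrib, ← Finset.mul_sum]
    nlinarith [h1, h2]
  · intro v v' u
    simp only [hmarg]
    have h1 := hγB v v' u
    have h2 := hγ'B v v' u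
    simp only [Finset.sum_sub_distrib, ← Finset.mul_sum]
    nlinarith [h1, h2]
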